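/- Let b ∈ ℝ^m, λ ≥ 0 and μ ≥ 0, and define F(X) := λ(Tr(X) − ‖X‖_F) + μ‖X‖_1 + (1/2)‖𝒜(X) − b‖_2² for Hermitian X. Let X ⪰ 0, set Y := X/‖X‖_F if X ≠ 0 and Y := 0 if X = 0, and let X' be a global minimizer over {Z ⪰ 0} of Z ↦ (1/2)‖𝒜(Z) − b‖_2² + λ·Tr(Z) − λ·Re⟨Z, Y⟩ + μ‖Z‖_1, where ⟨Z, Y⟩ := Tr(Y* Z). Then F(X') ≤ F(X). -/

import Mathlib

open Matrix BigOperators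
open scoped ComplexOrder

noncomputable section

/-- The measurement map 𝒜(X) = (aᵢ* X aᵢ)ᵢ (real part; real for Hermitian X). -/
def calA {d m : ℕ} (a : Fin m → Fin d → ℂ) (X : Matrix (Fin d) (Fin d) ℂ) : Fin m → ℝ :=
  fun i => (star (a i) ⬝ᵥ X.mulVec (a i)).re

/-- ℓ2 norm of a real vector. -/
def l2 {m : ℕ} (v : Fin m → ℝ) : ℝ := Real.sqrt (∑ i, (v i) ^ 2)

/-- Entrywise ℓ1 norm of a complex matrix. -/
def matL1 {d : ℕ} (X : Matrix (Fin d) (Fin d) ℂ) : ℝ := ∑ i, ∑ j, ‖X i j‖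

/-- Frobenius norm of a complex matrix. -/
def frob {d : ℕ} (X : Matrix (Fin d) (Fin d) ℂ) : ℝ :=
  Real.sqrt (∑ i, ∑ j, ‖X i j‖ ^ 2)

/-- ℓ1 norm of a complex vector. -/
def vecL1 {d : ℕ} (x : Fin d → ℂ) : ℝ := ∑ j, ‖x j‖

/-- ℓ2 norm of a complex vector. -/
def vecL2 {d : ℕ} (x : Fin d → ℂ) : ℝ := Real.sqrt (∑ j, ‖x j‖ ^ 2)

/-- Number of nonzero entries of a complex vector. -/
def vecL0 {d : ℕ} (x : Fin d → ℂ) : ℕ := (Finset.univ.filter fun j => x j ≠ 0).card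

lemma trace_re_eq {d : ℕ} (A B : Matrix (Fin d) (Fin d) ℂ) :
    ((Aᴴ * B).trace).re = ∑ i, ∑ j, ((starRingEnd ℂ) (A j i) * B j i).re := by
  simp [Matrix.trace, Matrix.mul_apply, Matrix.conjTranspose_apply, Complex.re_sum]

lemma trace_self_re {d : ℕ} (X : Matrix (Fin d) (Fin d) ℂ) :
    ((Xᴴ * X).trace).re = (frob X) ^ 2 := by
  rw [trace_re_eq, frob, Real.sq_sqrt (by positivity)]
  rw [Finset.sum_comm]
  congr 1; ext i; congr 1; ext j
  rw [← Complex.normSq_eq_norm_sq]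
  simp [Complex.normSq_eq_conj_mul_self, Complex.normSq_apply]

lemma cs_trace {d : ℕ} (A B : Matrix (Fin d) (Fin d) ℂ) :
    ((Aᴴ * B).trace).re ≤ frob A * frob B := by
  rw [trace_re_eq]
  have h1 : ∑ i, ∑ j, ((starRingEnd ℂ) (A j i) * B j i).re
      ≤ ∑ i, ∑ j, ‖A j i‖ * ‖B j i‖ := by
    refine Finset.sum_le_sum fun i _ => Finset.sum_le_sum fun j _ => ?_
    calc ((starRingEnd ℂ) (A j i) * B j i).re ≤ ‖(starRingEnd ℂ) (A j i) * B j i‖ :=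
          Complex.re_le_norm _
      _ = ‖A j i‖ * ‖B j i‖ := by
          rw [norm_mul, Complex.norm_conj]
  refine h1.trans ?_
  have h2 := Real.sum_mul_le_sqrt_mul_sqrt (Finset.univ : Finset (Fin d × Fin d))
    (fun p => ‖A p.2 p.1‖) (fun p => ‖B p.2 p.1‖)
  rw [Fintype.sum_prod_type] at h2
  refine h2.trans_eq ?_
  unfold frob
  congr 2
  · rw [Fintype.sum_prod_type, Finset.sum_comm]
  · rw [Fintype.sum_prod_type, Finset.sum_comm]

lemma frob_smul {d : ℕ} (c : ℝ) (hc : 0 ≤ c) (X : Matrix (Fin d) (Fin d) ℂ) :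
    frob ((c : ℂ) • X) = c * frob X := by
  unfold frob
  have h : ∀ i j : Fin d, ‖((c:ℂ) • X) i j‖ ^ 2 = c ^ 2 * ‖X i j‖ ^ 2 := by
    intro i j; simp [mul_pow, norm_mul, Complex.norm_real, abs_of_nonneg hc]
  simp_rw [h, ← Finset.mul_sum]
  rw [Real.sqrt_mul (sq_nonneg c), Real.sqrt_sq hc]

lemma frob_pos {d : ℕ} (X : Matrix (Fin d) (Fin d) ℂ) (hX : X ≠ 0) : 0 < frob X := by
  have : ∃ i j, X i j ≠ 0 := by
    by_contra h
    push_neg at h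
    exact hX (by ext i j; simpa using h i j)
  obtain ⟨i, j, hij⟩ := this
  apply Real.sqrt_pos.2
  refine Finset.sum_pos' (fun k _ => Finset.sum_nonneg fun l _ => by positivity)
    ⟨i, Finset.mem_univ i, ?_⟩
  refine Finset.sum_pos' (fun l _ => by positivity) ⟨j, Finset.mem_univ j, ?_⟩
  exact pow_pos (norm_pos_iff.mpr hij) 2

/-- One DCA step does not increase the objective F (Lemma 5.1). -/
theorem dca_step_decreases {d m : ℕ} (a : Fin m → Fin d → ℂ) (b : Fin m → ℝ)
    (lam mu : ℝ) (hlam : 0 ≤ lam) (hmu : 0 ≤ mu)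
    (F : Matrix (Fin d) (Fin d) ℂ → ℝ)
    (hF : ∀ X, F X = lam * ((X.trace).re - frob X) + mu * matL1 X
        + (1/2) * (l2 (fun i => calA a X i - b i)) ^ 2)
    (X : Matrix (Fin d) (Fin d) ℂ) (hX : X.PosSemidef)
    (Y : Matrix (Fin d) (Fin d) ℂ)
    (hY : Y = if X = 0 then 0 else (frob X : ℂ)⁻¹ • X)
    (X' : Matrix (Fin d) (Fin d) ℂ) (hX' : X'.PosSemidef)
    (hmin : ∀ Z : Matrix (Fin d) (Fin d) ℂ, Z.PosSemidef →
      (1/2) * (l2 (fun i => calA a X' i - b i)) ^ 2 + lam * (X'.trace).re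
          - lam * ((Yᴴ * X').trace).re + mu * matL1 X' ≤
      (1/2) * (l2 (fun i => calA a Z i - b i)) ^ 2 + lam * (Z.trace).re
          - lam * ((Yᴴ * Z).trace).re + mu * matL1 Z) :
    F X' ≤ F X := by
  have hmain := hmin X hX
  rw [hF X', hF X, mul_sub, mul_sub]
  have hfX' : (0:ℝ) ≤ frob X' := Real.sqrt_nonneg _
  by_cases h0 : X = 0
  · subst h0
    rw [if_pos rfl] at hY
    subst hY
    have e1 : (((0 : Matrix (Fin d) (Fin d) ℂ)ᴴ * X').trace).re = 0 := by simp
    have e2 : (((0 : Matrix (Fin d) (Fin d) ℂ)ᴴ * (0 : Matrix (Fin d) (Fin d) ℂ)).trace).re = 0 := by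
      simp
    have e3 : frob (0 : Matrix (Fin d) (Fin d) ℂ) = 0 := by simp [frob]
    rw [e1, e2] at hmain
    rw [e3]
    have hl : 0 ≤ lam * frob X' := mul_nonneg hlam hfX'
    linarith
  · have hfX : 0 < frob X := frob_pos X h0
    rw [if_neg h0] at hY
    have hYc : Y = (((frob X)⁻¹ : ℝ) : ℂ) • X := by rw [hY]; norm_cast
    have hfrobY : frob Y = 1 := by
      rw [hYc, frob_smul _ (by positivity), inv_mul_cancel₀ hfX.ne']
    have hc' : ((Yᴴ * X').trace).re ≤ frob X' := by
      have h := cs_trace Y X'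
      rwa [hfrobY, one_mul] at h
    have hcX : ((Yᴴ * X).trace).re = frob X := by
      have hmul : Yᴴ * X = ((((frob X)⁻¹ : ℝ)) : ℂ) • (Xᴴ * X) := by
        rw [hYc, Matrix.conjTranspose_smul, Matrix.smul_mul]
        congr 1
        simp
      rw [hmul, Matrix.trace_smul, smul_eq_mul, Complex.re_ofReal_mul, trace_self_re,
        pow_two, ← mul_assoc, inv_mul_cancel₀ hfX.ne', one_mul]
    rw [hcX] at hmain
    have hl : lam * ((Yᴴ * X').trace).re ≤ lam * frob X' :=
      mul_le_mul_of_nonneg_left hc' hlam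
    linarith
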